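/- Let X ⊆ ℤ^d be a lattice-convex set, H a hiding set for X, and suppose h ∈ H is not an observer of X. Then for every observer y ∈ obs(X) with y ∈ conv({h} ∪ X), the set (H \ {h}) ∪ {y} is again a hiding set for X of the same cardinality as H. -/

import Mathlib

/-- Coercion of an integer point to a real point. -/
def toR {d : ℕ} (z : Fin d → ℤ) : Fin d → ℝ := fun i => (z i : ℝ)

/-- The set of observers of `X ⊆ ℤ^d`. -/
def Obs {d : ℕ} (X : Set (Fin d → ℤ)) : Set (Fin d → ℤ) :=
  {z | z ∉ X ∧ ∀ w : Fin d → ℤ,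
    toR w ∈ convexHull ℝ (toR '' insert z X) → w ∈ insert z X}

/-- `S` is a hiding set for the lattice-convex set `X`. -/
def HidingSet {d : ℕ} (X S : Set (Fin d → ℤ)) : Prop :=
  (∀ z ∈ S, z ∉ X ∧ toR z ∈ (affineSpan ℝ (toR '' X) : Set (Fin d → ℝ))) ∧
  ∀ x ∈ S, ∀ y ∈ S, x ≠ y →
    (convexHull ℝ {toR x, toR y} ∩ convexHull ℝ (toR '' X)).Nonempty

/-- If `y ∈ [h,q]` with `q ∈ C`, `p ∈ [x,h] ∩ C`, and `x ∉ C`, then `[x,y]` meets `C`. -/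
lemma seg_aux1 {V : Type*} [AddCommGroup V] [Module ℝ V] {C : Set V}
    (hC : Convex ℝ C) {x h y q p : V} (hq : q ∈ C) (hp : p ∈ C)
    (hy : y ∈ segment ℝ h q) (hpx : p ∈ segment ℝ x h) (hx : x ∉ C) :
    (segment ℝ x y ∩ C).Nonempty := by
  obtain ⟨a, b, ha, hb, hab, hyeq⟩ := hy
  obtain ⟨u, s, hu, hs, hus, hpeq⟩ := hpx
  have hspos : 0 < s := by
    rcases hs.lt_or_eq with h' | h'
    · exact h'
    · exfalso
      apply hx
      have hu1 : u = 1 := by linarith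
      have : p = x := by rw [← hpeq, ← h', hu1]; simp
      rwa [← this]
  have hD : 0 < a + s * b := by
    rcases ha.lt_or_eq with h' | h'
    · have : 0 ≤ s * b := mul_nonneg hs hb
      linarith
    · have hb1 : b = 1 := by linarith
      rw [← h', hb1]; simpa using hspos
  set t : ℝ := s / (a + s * b) with htdef
  have ht : t * (a + s * b) = s := div_mul_cancel₀ s hD.ne'
  have ht0 : 0 ≤ t := div_nonneg hs hD.le
  have ht1 : t ≤ 1 := by
    rw [div_le_one hD]
    nlinarith
  have htb : t * b ≤ 1 := by
    have : 0 ≤ t * a := mul_nonneg ht0 ha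
    nlinarith
  refine ⟨(1 - t) • x + t • y, ⟨1 - t, t, by linarith, ht0, by ring, rfl⟩, ?_⟩
  have hu' : u = 1 - s := by linarith
  have hkey : (1 - t) • x + t • y = (1 - t * b) • p + (t * b) • q := by
    rw [← hyeq, ← hpeq, hu']
    match_scalars
    · linear_combination (-1 : ℝ) * ht + t * hab
    · linear_combination ht
    · ring
  rw [hkey]
  exact hC hp hq (by linarith) (mul_nonneg ht0 hb) (by ring)

/-- If `y ∈ [h,q]` with `q ∈ C` and `[y,h]` meets `C`, then `y ∈ C`. -/
lemma seg_aux2 {V : Type*} [AddCommGroup V] [Module ℝ V] {C : Set V}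
    (hC : Convex ℝ C) {h y q p : V} (hq : q ∈ C) (hp : p ∈ C)
    (hy : y ∈ segment ℝ h q) (hp2 : p ∈ segment ℝ y h) : y ∈ C := by
  obtain ⟨a, b, ha, hb, hab, hyeq⟩ := hy
  obtain ⟨u, t, hu, ht, hut, hpeq⟩ := hp2
  rcases ha.lt_or_eq with hapos | h'
  swap
  · have hb1 : b = 1 := by linarith
    have : y = q := by rw [← hyeq, ← h', hb1]; simp
    rwa [this]
  have he : 0 < a * u + t := by
    rcases ht.lt_or_eq with h' | h'
    · have : 0 ≤ a * u := mul_nonneg ha hu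
      linarith
    · have hu1 : u = 1 := by linarith
      rw [hu1, ← h']; simpa using hapos
  have hkey : y = (a / (a * u + t)) • p + (t * b / (a * u + t)) • q := by
    rw [← hpeq, ← hyeq]
    match_scalars
    · rw [div_mul_eq_mul_div, eq_div_iff he.ne']
      ring
    · field_simp
  rw [hkey]
  refine hC hp hq (by positivity) (by positivity) ?_
  rw [← add_div, div_eq_one_iff_eq he.ne']
  linear_combination (-a) * hut + t * hab

/-- replacing a non-observer `h` of a hiding set `H` by an observer
`y ∈ conv({h} ∪ X)` yields a hiding set of the same cardinality. -/
theorem hiding_set_swap_observer (d : ℕ) (X : Set (Fin d → ℤ))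
    (hX : ∀ z : Fin d → ℤ, toR z ∈ convexHull ℝ (toR '' X) ↔ z ∈ X)
    (H : Set (Fin d → ℤ)) (hH : HidingSet X H)
    (h : Fin d → ℤ) (hhH : h ∈ H) (hhobs : h ∉ Obs X)
    (y : Fin d → ℤ) (hy : y ∈ Obs X)
    (hyconv : toR y ∈ convexHull ℝ (toR '' insert h X)) :
    HidingSet X (insert y (H \ {h})) ∧ (insert y (H \ {h})).ncard = H.ncard := by
  obtain ⟨hHmem, hHpair⟩ := hH
  obtain ⟨hhX, hhaff⟩ := hHmem h hhH
  obtain ⟨hyX, hyObs⟩ := hy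
  rw [Set.image_insert_eq] at hyconv
  -- X must be nonempty, otherwise y = h, contradicting h ∉ Obs X
  rcases X.eq_empty_or_nonempty with hXe | ⟨x0, hx0⟩
  · exfalso
    apply hhobs
    subst hXe
    simp only [Set.image_empty] at hyconv
    have hins : insert (toR h) (∅ : Set (Fin d → ℝ)) = {toR h} := by simp
    rw [hins, convexHull_singleton, Set.mem_singleton_iff] at hyconv
    have hyh : y = h := by
      funext i
      have := congrFun hyconv i
      simp only [toR] at this
      exact_mod_cast this
    rw [← hyh]
    exact ⟨hyX, hyObs⟩
  have hXne : (toR '' X).Nonempty := ⟨toR x0, Set.mem_image_of_mem _ hx0⟩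
  rw [convexHull_insert hXne, mem_convexJoin] at hyconv
  obtain ⟨h', hh', q, hqC, hyseg⟩ := hyconv
  rw [Set.mem_singleton_iff] at hh'
  subst hh'
  have hyC : toR y ∉ convexHull ℝ (toR '' X) := fun hc => hyX ((hX y).mp hc)
  -- the segment [y, h] does not meet conv X
  have hyhseg : ∀ p, p ∈ convexHull ℝ {toR y, toR h} → p ∉ convexHull ℝ (toR '' X) := by
    intro p hp hpC
    rw [convexHull_pair] at hp
    exact hyC (seg_aux2 (convex_convexHull ℝ _) hqC hpC hyseg hp)
  -- y ∉ H \ {h}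
  have hyH : y ∉ H \ {h} := by
    rintro ⟨hyHmem, hyh⟩
    obtain ⟨p, hp1, hp2⟩ := hHpair y hyHmem h hhH (fun e => hyh e)
    exact hyhseg p hp1 hp2
  -- key: segments from other points of H to y meet conv X
  have hsegkey : ∀ x ∈ H, x ≠ h →
      (convexHull ℝ {toR x, toR y} ∩ convexHull ℝ (toR '' X)).Nonempty := by
    intro x hxH hxh
    obtain ⟨p, hp1, hp2⟩ := hHpair x hxH h hhH hxh
    rw [convexHull_pair] at hp1
    have hxC : toR x ∉ convexHull ℝ (toR '' X) :=
      fun hc => (hHmem x hxH).1 ((hX x).mp hc)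
    rw [convexHull_pair]
    exact seg_aux1 (convex_convexHull ℝ _) hqC hp2 hyseg hp1 hxC
  -- y is in the affine span
  have hyaff : toR y ∈ (affineSpan ℝ (toR '' X) : Set (Fin d → ℝ)) := by
    have hsub : convexHull ℝ (insert (toR h) (toR '' X)) ⊆
        (affineSpan ℝ (toR '' X) : Set (Fin d → ℝ)) := by
      apply convexHull_min
      · exact Set.insert_subset hhaff (subset_affineSpan ℝ _)
      · exact (affineSpan ℝ (toR '' X)).convex
    apply hsub
    rw [convexHull_insert hXne, mem_convexJoin]
    exact ⟨toR h, rfl, q, hqC, hyseg⟩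
  constructor
  · constructor
    · rintro z (rfl | ⟨hzH, -⟩)
      · exact ⟨hyX, hyaff⟩
      · exact hHmem z hzH
    · rintro x1 (rfl | ⟨hx1H, hx1h⟩) x2 (rfl | ⟨hx2H, hx2h⟩) hne
      · exact absurd rfl hne
      · obtain ⟨p, hp1, hp2⟩ := hsegkey x2 hx2H hx2h
        refine ⟨p, ?_, hp2⟩
        rwa [Set.pair_comm]
      · exact hsegkey x1 hx1H hx1h
      · exact hHpair x1 hx1H x2 hx2H hne
  · have henc : (insert y (H \ {h})).encard = H.encard := by
      rw [Set.encard_insert_of_notMem hyH, Set.encard_diff_singleton_add_one hhH]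
    rw [Set.ncard_def, Set.ncard_def, henc]
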